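/- Let n ∈ ℕ, let c : Fin n → Fin n → ℝ≥0∞ be a cost matrix, let M : Fin n ≃ Fin n be an assignment, let r : Fin n ≃ Fin n be an ordering of the robots, and fix k : Fin n with cell S_k = { σ : Fin n ≃ Fin n | σ (r j) = M (r j) for every j < k, and σ (r k) ≠ M (r k) } nonempty. Define the modified cost matrix c′ by c′ i g = c i g for all (i,g) except c′ (r k) (M (r k)) = ∞ (omitting the edge (r k, M (r k))). Then the minimum of the c-cost over S_k equals the minimum of the c′-cost over the set { σ : Fin n ≃ Fin n | σ (r j) = M (r j) for every j < k } (the assignments respecting the include set { (r j, M (r j)) | j < k }). -/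

import Mathlib

open ENNReal

/-- Minimizing the cost over the cell
`S k = {σ | σ (r j) = M (r j) for all j < k, and σ (r k) ≠ M (r k)}`
amounts to minimizing, over the assignments that respect the include set
`{(r j, M (r j)) | j < k}`, the modified cost matrix `c'` obtained from `c`
by setting the cost of the omitted edge `(r k, M (r k))` to `∞`. -/
theorem omit_edge_min_eq (n : ℕ) (c : Fin n → Fin n → ℝ≥0∞)
    (M r : Fin n ≃ Fin n) (k : Fin n)
    (hne : ({σ : Fin n ≃ Fin n |
      (∀ j, j < k → σ (r j) = M (r j)) ∧ σ (r k) ≠ M (r k)}).Nonempty)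
    (c' : Fin n → Fin n → ℝ≥0∞)
    (hc' : ∀ i g, c' i g = if i = r k ∧ g = M (r k) then ⊤ else c i g) :
    (⨅ σ ∈ {σ : Fin n ≃ Fin n |
        (∀ j, j < k → σ (r j) = M (r j)) ∧ σ (r k) ≠ M (r k)},
      ∑ i, c i (σ i)) =
    (⨅ σ ∈ {σ : Fin n ≃ Fin n | ∀ j, j < k → σ (r j) = M (r j)},
      ∑ i, c' i (σ i)) := by
  have key : ∀ σ : Fin n ≃ Fin n, σ (r k) ≠ M (r k) →
      (∑ i, c' i (σ i)) = ∑ i, c i (σ i) := by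
    intro σ hσ
    refine Finset.sum_congr rfl fun i _ => ?_
    rw [hc']
    refine if_neg fun ⟨h1, h2⟩ => hσ ?_
    rw [← h2, h1]
  apply le_antisymm
  · refine le_iInf₂ fun σ hσ => ?_
    by_cases h : σ (r k) = M (r k)
    · have : (∑ i, c' i (σ i)) = ⊤ := by
        refine eq_top_iff.2 (le_trans ?_ (Finset.single_le_sum
          (f := fun i => c' i (σ i)) (fun i _ => zero_le) (Finset.mem_univ (r k))))
        show (⊤ : ℝ≥0∞) ≤ c' (r k) (σ (r k))
        rw [hc', if_pos ⟨rfl, h⟩]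
      simp [this]
    · have hmem : σ ∈ {σ : Fin n ≃ Fin n |
          (∀ j, j < k → σ (r j) = M (r j)) ∧ σ (r k) ≠ M (r k)} := ⟨hσ, h⟩
      rw [key σ h]
      exact iInf₂_le σ hmem
  · refine le_iInf₂ fun σ hσ => ?_
    rw [← key σ hσ.2]
    exact iInf₂_le σ hσ.1
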